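/- There exists a finite group G of order 168 admitting a (0; 2, 3, 7)-generating vector; consequently (0; 2, 3, 7) is an actual signature for genus 3. -/

import Mathlib

open Matrix

section Aux

abbrev M3 := Matrix (Fin 3) (Fin 3) (ZMod 2)
abbrev G3 := GL (Fin 3) (ZMod 2)

def Am : M3 := !![0,0,1;0,1,0;1,0,0]
def Bm : M3 := !![0,1,0;1,0,1;1,1,0]
def Cm : M3 := !![1,0,1;0,0,1;1,1,1]

def au : G3 := ⟨Am, Am, by decide, by decide⟩
def bu : G3 := ⟨Bm, Bm*Bm, by decide, by decide⟩
def cu : G3 := ⟨Cm, Am*Bm, by decide, by decide⟩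

lemma card_G3 : Fintype.card G3 = 168 := by
  rw [← Nat.card_eq_fintype_card, Matrix.card_GL_field]
  simp [Fin.prod_univ_three, ZMod.card]

lemma order_au : orderOf au = 2 := by
  have h2 : Fact (Nat.Prime 2) := ⟨by norm_num⟩
  have hpow : au ^ 2 = 1 := by rw [sq]; exact Units.ext (by decide)
  refine orderOf_eq_prime hpow (fun h => ?_)
  exact absurd (congrArg Units.val h) (by decide)

lemma order_bu : orderOf bu = 3 := by
  have h3 : Fact (Nat.Prime 3) := ⟨by norm_num⟩
  have hpow : bu ^ 3 = 1 := by
    rw [pow_succ, sq]; exact Units.ext (by decide)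
  refine orderOf_eq_prime hpow (fun h => ?_)
  exact absurd (congrArg Units.val h) (by decide)

lemma order_cu : orderOf cu = 7 := by
  have h7 : Fact (Nat.Prime 7) := ⟨by norm_num⟩
  have hpow : cu ^ 7 = 1 := by
    refine Units.ext ?_
    rw [Units.val_pow_eq_pow_val]
    show (Cm ^ 7 : M3) = 1
    decide
  refine orderOf_eq_prime hpow (fun h => ?_)
  exact absurd (congrArg Units.val h) (by decide)

lemma closure_abc : Subgroup.closure {au, bu, cu} = (⊤ : Subgroup G3) := by
  set H := Subgroup.closure ({au, bu, cu} : Set G3) with hH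
  have ha : au ∈ H := Subgroup.subset_closure (by simp)
  have hb : bu ∈ H := Subgroup.subset_closure (by simp)
  have main : ∀ w : G3, w ∈ H → ∀ g : G3, (g : M3) = (w : M3) → g ∈ H := by
    intro w hw g h
    exact (Units.ext h : g = w) ▸ hw
  have key : ∀ M : M3, M.det ≠ 0 → ∀ g : G3, (g : M3) = M → g ∈ H := by
    intro M hM
    refine Matrix.diagonal_transvection_induction_of_det_ne_zero
      (fun N => ∀ g : G3, (g : M3) = N → g ∈ H) M hM ?_ ?_ ?_
    · intro D hD g hg
      have hDi : ∀ i, D i = 1 := by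
        intro i
        have hne : D i ≠ 0 := by
          intro h0
          apply hD
          rw [Matrix.det_diagonal]
          exact Finset.prod_eq_zero (Finset.mem_univ i) h0
        revert hne
        exact (by decide : ∀ x : ZMod 2, x ≠ 0 → x = 1) (D i)
      have hD1 : Matrix.diagonal D = 1 := by
        rw [show D = fun _ => 1 from funext hDi, Matrix.diagonal_one]
      rw [hD1] at hg
      rw [(Units.ext hg : g = 1)]
      exact one_mem H
    · rintro ⟨i, j, hij, c⟩ g hg
      simp only [Matrix.TransvectionStruct.toMatrix_mk] at hg
      fin_cases i <;> fin_cases j <;> (try exact absurd rfl hij) <;> fin_cases c <;>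
        simp only [Matrix.transvection] at hg
      · exact main 1 (one_mem H) g (by rw [hg]; decide)
      · exact main (au*bu*au*bu*bu*au) (mul_mem (mul_mem (mul_mem (mul_mem (mul_mem ha hb) ha) hb) hb) ha) g (by rw [hg]; decide)
      · exact main 1 (one_mem H) g (by rw [hg]; decide)
      · exact main (au*bu*au*bu*au*bu*bu*au*bu*au*bu*au) (mul_mem (mul_mem (mul_mem (mul_mem (mul_mem (mul_mem (mul_mem (mul_mem (mul_mem (mul_mem (mul_mem ha hb) ha) hb) ha) hb) hb) ha) hb) ha) hb) ha) g (by rw [hg]; decide)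
      · exact main 1 (one_mem H) g (by rw [hg]; decide)
      · exact main (bu*bu*au*bu) (mul_mem (mul_mem (mul_mem hb hb) ha) hb) g (by rw [hg]; decide)
      · exact main 1 (one_mem H) g (by rw [hg]; decide)
      · exact main (au*bu*bu*au*bu*au) (mul_mem (mul_mem (mul_mem (mul_mem (mul_mem ha hb) hb) ha) hb) ha) g (by rw [hg]; decide)
      · exact main 1 (one_mem H) g (by rw [hg]; decide)
      · exact main (bu*au*bu*au*bu*bu*au*bu*au*bu) (mul_mem (mul_mem (mul_mem (mul_mem (mul_mem (mul_mem (mul_mem (mul_mem (mul_mem hb ha) hb) ha) hb) hb) ha) hb) ha) hb) g (by rw [hg]; decide)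
      · exact main 1 (one_mem H) g (by rw [hg]; decide)
      · exact main (bu*au*bu*bu) (mul_mem (mul_mem (mul_mem hb ha) hb) hb) g (by rw [hg]; decide)
    · intro A B hA hB PA PB g hg
      have hAu : IsUnit A := (Matrix.isUnit_iff_isUnit_det A).mpr (isUnit_iff_ne_zero.mpr hA)
      obtain ⟨uA, huA⟩ := hAu
      have huAmem : uA ∈ H := PA uA huA
      have hgB : ((uA⁻¹ * g : G3) : M3) = B := by
        have h1 : ((uA⁻¹ * g : G3) : M3) = ((uA⁻¹ : G3) : M3) * (g : M3) := rfl
        rw [h1, hg, ← Matrix.mul_assoc]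
        have h2 : ((uA⁻¹ : G3) : M3) * A = 1 := by
          rw [← huA]; exact uA.inv_mul
        rw [h2, Matrix.one_mul]
      have hgBmem : uA⁻¹ * g ∈ H := PB _ hgB
      have hsplit : g = uA * (uA⁻¹ * g) := by group
      rw [hsplit]
      exact mul_mem huAmem hgBmem
  rw [eq_top_iff]
  intro g _
  refine key (g : M3) ?_ g rfl
  exact isUnit_iff_ne_zero.mp ((Matrix.isUnit_iff_isUnit_det _).mp g.isUnit)

end Aux

/-- The Riemann–Hurwitz formula `σ - 1 = N (h - 1 + (1/2) Σ (1 - 1/mᵢ))`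
as an equality of rational numbers. -/
def RHFormula (σ N h : ℕ) (m : List ℕ) : Prop :=
  (σ : ℚ) - 1 = (N : ℚ) * ((h : ℚ) - 1 + (1 / 2) * (m.map (fun x => 1 - 1 / (x : ℚ))).sum)

/-- `(h; m₁, …, m_r)` is a potential signature for genus `σ`: each `mᵢ ≥ 2` and there is
a positive integer `N` with `mᵢ ∣ N` for all `i` satisfying the Riemann–Hurwitz formula. -/
def IsPotentialSignature (σ h : ℕ) (m : List ℕ) : Prop :=
  (∀ x ∈ m, 2 ≤ x) ∧ ∃ N : ℕ, 0 < N ∧ (∀ x ∈ m, x ∣ N) ∧ RHFormula σ N h m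

/-- The set `P_σ` of potential signatures for genus `σ`, as a set of pairs `(h, [m₁, …, m_r])`. -/
def PotSig (σ : ℕ) : Set (ℕ × List ℕ) := {p | IsPotentialSignature σ p.1 p.2}
open scoped commutatorElement
/-- `(a, b, c)` is an `(h; m₁, …, m_r)`-generating vector for the group `G`:
the elements generate `G`, the order of `cᵢ` is `mᵢ`, and
`∏ ⁅aᵢ, bᵢ⁆ · ∏ cⱼ = 1`. -/
def IsGenVector (G : Type*) [Group G] (h : ℕ) (m : List ℕ)
    (a b : Fin h → G) (c : Fin m.length → G) : Prop :=
  Subgroup.closure (Set.range a ∪ Set.range b ∪ Set.range c) = ⊤ ∧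
  (∀ i : Fin m.length, orderOf (c i) = m.get i) ∧
  (List.ofFn fun i => ⁅a i, b i⁆).prod * (List.ofFn c).prod = 1

/-- `G` admits an `(h; m₁, …, m_r)`-generating vector. -/
def HasGenVector (G : Type*) [Group G] (h : ℕ) (m : List ℕ) : Prop :=
  ∃ (a b : Fin h → G) (c : Fin m.length → G), IsGenVector G h m a b c

/-- `(h; m₁, …, m_r)` (with all `mᵢ ≥ 2`) is an actual signature for genus `σ`: some finite
group `G` admits an `(h; m₁, …, m_r)`-generating vector and `N = |G|` satisfies the
Riemann–Hurwitz formula for genus `σ`. -/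
def IsActualSignature (σ h : ℕ) (m : List ℕ) : Prop :=
  (∀ x ∈ m, 2 ≤ x) ∧
  ∃ (G : Type) (_ : Group G) (_ : Fintype G),
    HasGenVector G h m ∧ RHFormula σ (Fintype.card G) h m

lemma hasGenVec_G3 : HasGenVector G3 0 [2, 3, 7] := by
  refine ⟨Fin.elim0, Fin.elim0, ![au, bu, cu], ?_, ?_, ?_⟩
  · have h1 : Set.range (Fin.elim0 : Fin 0 → G3) = ∅ := Set.range_eq_empty _
    have h2 : Set.range ![au, bu, cu] = {au, bu, cu} := by
      ext x
      simp only [Set.mem_range, Set.mem_insert_iff, Set.mem_singleton_iff]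
      constructor
      · rintro ⟨i, rfl⟩
        fin_cases i
        · exact Or.inl rfl
        · exact Or.inr (Or.inl rfl)
        · exact Or.inr (Or.inr rfl)
      · rintro (rfl | rfl | rfl)
        exacts [⟨0, rfl⟩, ⟨1, rfl⟩, ⟨2, rfl⟩]
    rw [h1, Set.union_empty, Set.empty_union, h2, closure_abc]
  · intro i
    fin_cases i
    · exact order_au
    · exact order_bu
    · exact order_cu
  · show (List.ofFn fun i : Fin 0 => _).prod * (List.ofFn ![au, bu, cu]).prod = 1
    rw [List.ofFn_zero, List.prod_nil, one_mul]
    show [au, bu, cu].prod = 1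
    simp only [List.prod_cons, List.prod_nil, mul_one]
    exact Units.ext (by decide)

/-- There is a finite group of order 168 admitting a `(0; 2, 3, 7)`-generating vector;
consequently `(0; 2, 3, 7)` is an actual signature for genus 3. -/
theorem hurwitz_genus_three :
    (∃ (G : Type) (_ : Group G) (_ : Fintype G),
      Fintype.card G = 168 ∧ HasGenVector G 0 [2, 3, 7]) ∧
    IsActualSignature 3 0 [2, 3, 7] := by
  have hRH : RHFormula 3 168 0 [2, 3, 7] := by
    unfold RHFormula
    norm_num
  refine ⟨⟨G3, inferInstance, inferInstance, card_G3, hasGenVec_G3⟩,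
    ⟨by intro x hx; fin_cases hx <;> norm_num,
     G3, inferInstance, inferInstance, hasGenVec_G3, ?_⟩⟩
  rw [card_G3]
  exact hRH
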